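/- Let x_1,…,x_n be points in the closed unit ball of a separable Hilbert space H, let C_n := (1/n) Σ_{i=1}^n x_i ⊗ x_i, and for a closed subspace V of H let d_R(V) := (1/n) Σ_{i=1}^n ‖x_i − P_V(x_i)‖²_H. Then (i) d_R(V) = tr((I − P_V) C_n) for every closed subspace V, and (ii) for every k ≥ 1, among all linear subspaces V of H of dimension k, d_R(V) is minimized by the span of eigenvectors of C_n corresponding to its k largest eigenvalues. -/

import Mathlib

open MeasureTheory ContinuousLinearMap
open scoped ENNReal NNReal InnerProductSpace

noncomputable section

namespace SubspaceLearning

variable {H : Type*} [NormedAddCommGroup H] [InnerProductSpace ℂ H] [CompleteSpace H]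

/-- The rank-one operator `x ⊗ x : u ↦ ⟨x,u⟩ x`. -/
def rankOne (x : H) : H →L[ℂ] H := (innerSL ℂ x).smulRight x

/-- The (uncentered) covariance operator of a measure. -/
def covOp [MeasurableSpace H] (ρ : Measure H) : H →L[ℂ] H := ∫ x, rankOne x ∂ρ

/-- The empirical covariance operator of `n` sample points. -/
def empCov {n : ℕ} (x : Fin n → H) : H →L[ℂ] H := (n : ℂ)⁻¹ • ∑ i, rankOne (x i)

/-- The (topological) support of a measure. -/
def mSupport [MeasurableSpace H] (ρ : Measure H) : Set H :=
  {x : H | ∀ s : Set H, IsOpen s → x ∈ s → ρ s ≠ 0}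

/-- `S_ρ`: the closed linear span of the support of `ρ`. -/
def Sspan [MeasurableSpace H] (ρ : Measure H) : Submodule ℂ H :=
  (Submodule.span ℂ (mSupport ρ)).topologicalClosure

/-- Orthogonal projection onto (the closure of) a subspace, as an endomorphism of `H`. -/
def proj (U : Submodule ℂ H) : H →L[ℂ] H :=
  haveI : CompleteSpace U.topologicalClosure :=
    U.isClosed_topologicalClosure.completeSpace_coe
  U.topologicalClosure.subtypeL.comp (Submodule.orthogonalProjectionOnto U.topologicalClosure)

/-- `approxNum A k` : the `k`-th approximation number (`= (k+1)`-th largest singular value,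
for compact `A`); for a positive compact self-adjoint operator it is the `(k+1)`-th
largest eigenvalue (with multiplicity). -/
def approxNum (A : H →L[ℂ] H) (k : ℕ) : ℝ :=
  sInf ((fun F : H →L[ℂ] H => ‖A - F‖) ''
    {F | ∃ V : Submodule ℂ H, FiniteDimensional ℂ V ∧ Module.finrank ℂ V ≤ k ∧
      LinearMap.range (F : H →ₗ[ℂ] H) ≤ V})

/-- Schatten `p`-norm, `‖A‖_p = (∑ σ_k(A)^p)^{1/p}` (operator norm for `p = ∞`). -/
def schatten (p : ℝ≥0∞) (A : H →L[ℂ] H) : ℝ≥0∞ :=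
  if p = ∞ then ENNReal.ofReal ‖A‖
  else (∑' k : ℕ, ENNReal.ofReal (approxNum A k ^ p.toReal)) ^ p.toReal⁻¹

/-- `A^α` for a positive operator `A`, via the continuous functional calculus. -/
def opow (A : H →L[ℂ] H) (α : ℝ) : H →L[ℂ] H := cfc (fun s : ℝ => s ^ α) A

/-- `(A + t I)^α` for a positive operator `A`, via the continuous functional calculus. -/
def resPow (A : H →L[ℂ] H) (t α : ℝ) : H →L[ℂ] H := cfc (fun s : ℝ => (s + t) ^ α) A

/-- The distance `d_{α,p}(U,V) = ‖(P_U − P_V) C^α‖_p`. -/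
def dap (C : H →L[ℂ] H) (α : ℝ) (p : ℝ≥0∞) (U V : Submodule ℂ H) : ℝ≥0∞ :=
  schatten p ((proj U - proj V).comp (opow C α))

/-- `W` is the span of eigenvectors of `A` corresponding to its `k` largest
eigenvalues (with multiplicity). -/
def IsTopEigenSubspace (A : H →L[ℂ] H) (k : ℕ) (W : Submodule ℂ H) : Prop :=
  ∃ u : Fin k → H, Orthonormal ℂ u ∧
    (∀ i : Fin k, A (u i) = (approxNum A (i : ℕ) : ℂ) • u i) ∧
    W = Submodule.span ℂ (Set.range u)

/-- Löwner partial order: `A ⪯ B` iff `⟨f, A f⟩ ≤ ⟨f, B f⟩` for all `f`. -/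
def Loewner (A B : H →L[ℂ] H) : Prop :=
  ∀ f : H, (⟪f, A f⟫_ℂ).re ≤ (⟪f, B f⟫_ℂ).re

instance instCompleteTC (U : Submodule ℂ H) : CompleteSpace U.topologicalClosure :=
  U.isClosed_topologicalClosure.completeSpace_coe

lemma proj_apply (U : Submodule ℂ H) (x : H) :
    proj U x = (Submodule.orthogonalProjectionOnto U.topologicalClosure x : H) := rfl

lemma proj_mem (U : Submodule ℂ H) (x : H) : proj U x ∈ U.topologicalClosure := by
  rw [proj_apply]; exact (Submodule.orthogonalProjectionOnto U.topologicalClosure x).2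

lemma sub_proj_mem (U : Submodule ℂ H) (x : H) : x - proj U x ∈ U.topologicalClosureᗮ := by
  rw [proj_apply]; exact Submodule.sub_starProjection_mem_orthogonal (K := U.topologicalClosure) x

lemma inner_proj_sub (U : Submodule ℂ H) {u : H} (hu : u ∈ U.topologicalClosure) (x : H) :
    ⟪u, x - proj U x⟫_ℂ = 0 :=
  (Submodule.mem_orthogonal _ _).mp (sub_proj_mem U x) u hu

lemma norm_sub_proj_sq (U : Submodule ℂ H) (x : H) :
    ‖x - proj U x‖ ^ 2 = ‖x‖ ^ 2 - ‖proj U x‖ ^ 2 := by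
  have h0 : ⟪proj U x, x - proj U x⟫_ℂ = 0 := inner_proj_sub U (proj_mem U x) x
  have h := norm_add_sq (𝕜 := ℂ) (proj U x) (x - proj U x)
  have hx : proj U x + (x - proj U x) = x := by abel
  rw [hx, h0] at h
  simp only [map_zero, mul_zero, add_zero] at h
  linarith

lemma norm_proj_sq {k : ℕ} {U : Submodule ℂ H} {w : Fin k → H} (hw : Orthonormal ℂ w)
    (hspan : Submodule.span ℂ (Set.range w) = U) (x : H) :
    ‖proj U x‖ ^ 2 = ∑ j, ‖(⟪w j, x⟫_ℂ)‖ ^ 2 := by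
  haveI : FiniteDimensional ℂ U := by
    rw [← hspan]; exact FiniteDimensional.span_of_finite ℂ (Set.finite_range w)
  have hcl : U.topologicalClosure = U :=
    (Submodule.closed_of_finiteDimensional U).submodule_topologicalClosure_eq
  have hwU : ∀ j, w j ∈ U.topologicalClosure := fun j => by
    rw [hcl, ← hspan]; exact Submodule.subset_span ⟨j, rfl⟩
  have hpU : proj U x ∈ Submodule.span ℂ (Set.range w) := by
    rw [hspan]
    have := proj_mem U x
    rwa [hcl] at this
  obtain ⟨c, hc⟩ := (Submodule.mem_span_range_iff_exists_fun ℂ).mp hpU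
  have hcj : ∀ j, c j = ⟪w j, x⟫_ℂ := by
    intro j
    have h1 : ⟪w j, proj U x⟫_ℂ = c j := by rw [← hc]; exact hw.inner_right_fintype c j
    have h2 : ⟪w j, x - proj U x⟫_ℂ = 0 := inner_proj_sub U (hwU j) x
    rw [inner_sub_right, sub_eq_zero, h1] at h2
    exact h2.symm
  have hps : ⟪proj U x, proj U x⟫_ℂ = ∑ j, (starRingEnd ℂ) (c j) * c j := by
    rw [← hc]; exact hw.inner_sum c c Finset.univ
  have : (‖proj U x‖ : ℝ) ^ 2 = Complex.re (∑ j, (starRingEnd ℂ) (c j) * c j) := by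
    rw [← hps]; exact (inner_self_eq_norm_sq (𝕜 := ℂ) _).symm
  rw [this, Complex.re_sum]
  refine Finset.sum_congr rfl fun j _ => ?_
  rw [hcj j, RCLike.conj_mul (K := ℂ) (⟪w j, x⟫_ℂ)]
  norm_cast

lemma finrank_le_inf_orthogonal (V W : Submodule ℂ H) [FiniteDimensional ℂ V]
    [FiniteDimensional ℂ W] :
    Module.finrank ℂ V ≤ Module.finrank ℂ (V ⊓ Wᗮ : Submodule ℂ H) + Module.finrank ℂ W := by
  haveI : CompleteSpace W := FiniteDimensional.complete ℂ W
  set f : V →ₗ[ℂ] W := (Submodule.orthogonalProjectionOnto W).toLinearMap.comp V.subtype with hf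
  have hrn : Module.finrank ℂ (LinearMap.range f) + Module.finrank ℂ (LinearMap.ker f)
      = Module.finrank ℂ V := LinearMap.finrank_range_add_finrank_ker f
  have hker : LinearMap.ker f = (Wᗮ).comap V.subtype := by
    ext v
    simp only [hf, LinearMap.mem_ker, LinearMap.comp_apply, Submodule.mem_comap,
      ContinuousLinearMap.coe_coe, Submodule.subtype_apply]
    exact Submodule.orthogonalProjectionOnto_eq_zero_iff
  have hker2 : Module.finrank ℂ (LinearMap.ker f) = Module.finrank ℂ (V ⊓ Wᗮ : Submodule ℂ H) := by
    rw [hker, ← Submodule.finrank_map_subtype_eq V ((Wᗮ).comap V.subtype),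
      Submodule.map_comap_subtype]
  have hrange : Module.finrank ℂ (LinearMap.range f) ≤ Module.finrank ℂ W :=
    Submodule.finrank_le _
  omega

lemma exists_norm_one_mem {U : Submodule ℂ H} (h : U ≠ ⊥) : ∃ z, z ∈ U ∧ ‖z‖ = 1 := by
  obtain ⟨z, hz, hz0⟩ := Submodule.exists_mem_ne_zero_of_ne_bot h
  refine ⟨((‖z‖ : ℂ))⁻¹ • z, U.smul_mem _ hz, ?_⟩
  have : ‖z‖ ≠ 0 := norm_ne_zero_iff.mpr hz0
  rw [norm_smul]
  simp [this]

lemma exists_orthonormal_perp : ∀ (k : ℕ) (V : Submodule ℂ H), FiniteDimensional ℂ V →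
    k ≤ Module.finrank ℂ V → ∀ Vs : Fin k → Submodule ℂ H, (∀ j, FiniteDimensional ℂ (Vs j)) →
    (∀ j : Fin k, Module.finrank ℂ (Vs j) ≤ (j : ℕ)) →
    ∃ w : Fin k → H, Orthonormal ℂ w ∧ (∀ j, w j ∈ V) ∧ ∀ j, w j ∈ (Vs j)ᗮ := by
  intro k
  induction k with
  | zero =>
    intro V _ _ Vs _ _
    exact ⟨fun j => j.elim0, ⟨fun j => j.elim0, fun j => j.elim0⟩, fun j => j.elim0,
      fun j => j.elim0⟩
  | succ k ih =>
    intro V hVfd hk Vs hVsfd hVsrk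
    haveI := hVfd
    haveI := hVsfd (Fin.last k)
    -- pick z in V ⊓ (Vs last)ᗮ
    have h1 : Module.finrank ℂ V ≤
        Module.finrank ℂ (V ⊓ (Vs (Fin.last k))ᗮ : Submodule ℂ H) +
          Module.finrank ℂ (Vs (Fin.last k)) := finrank_le_inf_orthogonal _ _
    have h2 : 0 < Module.finrank ℂ (V ⊓ (Vs (Fin.last k))ᗮ : Submodule ℂ H) := by
      have := hVsrk (Fin.last k)
      simp only [Fin.val_last] at this
      omega
    haveI hfd1 : FiniteDimensional ℂ (V ⊓ (Vs (Fin.last k))ᗮ : Submodule ℂ H) :=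
      Submodule.finiteDimensional_of_le inf_le_left
    have hne : (V ⊓ (Vs (Fin.last k))ᗮ : Submodule ℂ H) ≠ ⊥ := by
      intro hbot
      rw [hbot] at h2
      simp at h2
    obtain ⟨z, hzmem, hz1⟩ := exists_norm_one_mem hne
    have hzV : z ∈ V := hzmem.1
    have hzperp : z ∈ (Vs (Fin.last k))ᗮ := hzmem.2
    have hz0 : z ≠ 0 := by intro h; rw [h] at hz1; simp at hz1
    -- V' := V ⊓ (span z)ᗮ
    set V' : Submodule ℂ H := V ⊓ (ℂ ∙ z)ᗮ with hV'
    haveI : FiniteDimensional ℂ V' := Submodule.finiteDimensional_of_le inf_le_left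
    have hrkz : Module.finrank ℂ (ℂ ∙ z : Submodule ℂ H) = 1 := finrank_span_singleton hz0
    have hV'rk : k ≤ Module.finrank ℂ V' := by
      have h3 := finrank_le_inf_orthogonal V (ℂ ∙ z)
      rw [hrkz, ← hV'] at h3
      omega
    obtain ⟨w', hw'on, hw'V, hw'perp⟩ := ih V' inferInstance hV'rk
      (fun j => Vs j.castSucc) (fun j => hVsfd _) (fun j => by
        simpa using hVsrk j.castSucc)
    have hw'z : ∀ j, ⟪z, w' j⟫_ℂ = 0 := by
      intro j
      have : w' j ∈ (ℂ ∙ z)ᗮ := (hw'V j).2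
      exact (Submodule.mem_orthogonal _ _).mp this z (Submodule.mem_span_singleton_self z)
    refine ⟨Fin.snoc w' z, ⟨?_, ?_⟩, ?_, ?_⟩
    · intro j
      refine Fin.lastCases ?_ (fun i => ?_) j
      · simpa using hz1
      · simpa using hw'on.1 i
    · intro i j hij
      rcases Fin.eq_castSucc_or_eq_last i with ⟨i', rfl⟩ | rfl <;>
        rcases Fin.eq_castSucc_or_eq_last j with ⟨j', rfl⟩ | rfl
      · have hne' : i' ≠ j' := fun h => hij (by rw [h])
        simpa using hw'on.2 hne'
      · simp only [Fin.snoc_castSucc, Fin.snoc_last]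
        rw [← inner_conj_symm (w' i') z, hw'z i', map_zero]
      · simpa using hw'z j'
      · exact absurd rfl hij
    · intro j
      refine Fin.lastCases ?_ (fun i => ?_) j
      · simpa using hzV
      · simpa using (hw'V i).1
    · intro j
      refine Fin.lastCases ?_ (fun i => ?_) j
      · simpa using hzperp
      · simpa using hw'perp i

lemma approxNum_exists (A : H →L[ℂ] H) (k : ℕ) {ε : ℝ} (hε : 0 < ε) :
    ∃ (F : H →L[ℂ] H) (V : Submodule ℂ H), FiniteDimensional ℂ V ∧ Module.finrank ℂ V ≤ k ∧
      LinearMap.range (F : H →ₗ[ℂ] H) ≤ V ∧ ‖A - F‖ < approxNum A k + ε := by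
  have hne : ((fun F : H →L[ℂ] H => ‖A - F‖) ''
      {F | ∃ V : Submodule ℂ H, FiniteDimensional ℂ V ∧ Module.finrank ℂ V ≤ k ∧
        LinearMap.range (F : H →ₗ[ℂ] H) ≤ V}).Nonempty := by
    refine ⟨‖A - 0‖, Set.mem_image_of_mem _ ?_⟩
    exact ⟨⊥, inferInstance, by simp, by simp⟩
  obtain ⟨a, ha, hlt⟩ := Real.lt_sInf_add_pos hne hε
  obtain ⟨F, hF, rfl⟩ := ha
  obtain ⟨V, hVfd, hVrk, hVrange⟩ := hF
  exact ⟨F, V, hVfd, hVrk, hVrange, hlt⟩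

lemma inner_empCov {n : ℕ} (x : Fin n → H) (f : H) :
    ⟪f, empCov x f⟫_ℂ = (((n : ℝ)⁻¹ * ∑ i, ‖(⟪x i, f⟫_ℂ)‖ ^ 2 : ℝ) : ℂ) := by
  have h1 : empCov x f = (n : ℂ)⁻¹ • ∑ i, ⟪x i, f⟫_ℂ • x i := by
    simp [empCov, rankOne, ContinuousLinearMap.sum_apply]
  rw [h1, inner_smul_right, inner_sum]
  have h2 : ∀ i, ⟪f, ⟪x i, f⟫_ℂ • x i⟫_ℂ = ((‖(⟪x i, f⟫_ℂ)‖ ^ 2 : ℝ) : ℂ) := by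
    intro i
    rw [inner_smul_right, ← inner_conj_symm f (x i), RCLike.mul_conj]
    norm_cast
  rw [Finset.sum_congr rfl fun i _ => h2 i]
  push_cast
  ring

theorem statement19 {n : ℕ} (hn : 0 < n) (x : Fin n → H) (hx : ∀ i, ‖x i‖ ≤ 1) :
    (∀ V : Submodule ℂ H, IsClosed (V : Set H) → ∀ (ι : Type) (b : HilbertBasis ι ℂ H),
        (n : ℝ)⁻¹ * ∑ i, ‖x i - proj V (x i)‖ ^ 2 =
          ∑' j, (⟪b j, ((1 - proj V).comp (empCov x)) (b j)⟫_ℂ).re) ∧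
    (∀ k : ℕ, 1 ≤ k → ∀ W : Submodule ℂ H, IsTopEigenSubspace (empCov x) k W →
        ∀ V : Submodule ℂ H, FiniteDimensional ℂ V → Module.finrank ℂ V = k →
          (n : ℝ)⁻¹ * ∑ i, ‖x i - proj W (x i)‖ ^ 2 ≤
            (n : ℝ)⁻¹ * ∑ i, ‖x i - proj V (x i)‖ ^ 2) := by
  have hn' : (0 : ℝ) < n := by exact_mod_cast hn
  constructor
  · -- Part (i)
    intro V _ ι b
    set y : Fin n → H := fun i => x i - proj V (x i) with hy
    have hterm : ∀ j : ι, ⟪b j, ((1 - proj V).comp (empCov x)) (b j)⟫_ℂ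
        = (n : ℂ)⁻¹ * ∑ i, ⟪x i, b j⟫_ℂ * ⟪b j, y i⟫_ℂ := by
      intro j
      have h1 : empCov x (b j) = (n : ℂ)⁻¹ • ∑ i, ⟪x i, b j⟫_ℂ • x i := by
        simp [empCov, rankOne, ContinuousLinearMap.sum_apply]
      have hcomp : ((1 - proj V).comp (empCov x)) (b j)
          = (n : ℂ)⁻¹ • ∑ i, ⟪x i, b j⟫_ℂ • y i := by
        rw [ContinuousLinearMap.comp_apply, h1, _root_.map_smul, map_sum]
        congr 1
        refine Finset.sum_congr rfl fun i _ => ?_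
        rw [_root_.map_smul]
        show _ = _ • (x i - proj V (x i))
        simp [ContinuousLinearMap.sub_apply]
      rw [hcomp, inner_smul_right, inner_sum]
      congr 1
      exact Finset.sum_congr rfl fun i _ => by rw [inner_smul_right]
    have hsum : ∀ i, Summable fun j : ι => ⟪x i, b j⟫_ℂ * ⟪b j, y i⟫_ℂ :=
      fun i => b.summable_inner_mul_inner (x i) (y i)
    have htsum : ∀ i, ∑' j, ⟪x i, b j⟫_ℂ * ⟪b j, y i⟫_ℂ = ⟪x i, y i⟫_ℂ :=
      fun i => b.tsum_inner_mul_inner (x i) (y i)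
    have hS : Summable fun j : ι => ∑ i, ⟪x i, b j⟫_ℂ * ⟪b j, y i⟫_ℂ :=
      summable_sum fun i _ => hsum i
    have hxy : ∀ i, ⟪x i, y i⟫_ℂ = ((‖y i‖ ^ 2 : ℝ) : ℂ) := by
      intro i
      have h0 : ⟪proj V (x i), y i⟫_ℂ = 0 := inner_proj_sub V (proj_mem V (x i)) (x i)
      have hxe : x i = proj V (x i) + y i := by simp [hy]
      calc ⟪x i, y i⟫_ℂ = ⟪proj V (x i) + y i, y i⟫_ℂ := by rw [← hxe]
        _ = ⟪proj V (x i), y i⟫_ℂ + ⟪y i, y i⟫_ℂ := inner_add_left _ _ _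
        _ = ((‖y i‖ ^ 2 : ℝ) : ℂ) := by
            rw [h0, zero_add, inner_self_eq_norm_sq_to_K]
            norm_cast
    have key : ∑' j, (⟪b j, ((1 - proj V).comp (empCov x)) (b j)⟫_ℂ).re
        = ((n : ℂ)⁻¹ * ∑ i, ⟪x i, y i⟫_ℂ).re := by
      have h2 : ∀ j : ι, (⟪b j, ((1 - proj V).comp (empCov x)) (b j)⟫_ℂ).re
          = ((n : ℂ)⁻¹ * ∑ i, ⟪x i, b j⟫_ℂ * ⟪b j, y i⟫_ℂ).re := fun j => by rw [hterm j]
      rw [tsum_congr h2]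
      have hre_eq : ∑' j, ((n : ℂ)⁻¹ * ∑ i, ⟪x i, b j⟫_ℂ * ⟪b j, y i⟫_ℂ).re
          = ((∑' j, ((n : ℂ)⁻¹ * ∑ i, ⟪x i, b j⟫_ℂ * ⟪b j, y i⟫_ℂ)) : ℂ).re := by
        simpa using (Complex.reCLM.map_tsum (hS.mul_left ((n : ℂ)⁻¹))).symm
      rw [hre_eq, tsum_mul_left, Summable.tsum_finsetSum fun i _ => hsum i]
      congr 2
      exact Finset.sum_congr rfl fun i _ => htsum i
    have hC : ((n : ℂ)⁻¹ * ∑ i, ⟪x i, y i⟫_ℂ)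
        = (((n : ℝ)⁻¹ * ∑ i, ‖y i‖ ^ 2 : ℝ) : ℂ) := by
      rw [Finset.sum_congr rfl fun i _ => hxy i]
      push_cast
      ring
    rw [key, hC, Complex.ofReal_re]
  · -- Part (ii)
    intro k hk W hW V hVfd hVrk
    obtain ⟨u, hu_on, hu_eig, hWspan⟩ := hW
    set Q : H → ℝ := fun f => ∑ i, ‖(⟪x i, f⟫_ℂ)‖ ^ 2 with hQ
    have hQC : ∀ f, ⟪f, empCov x f⟫_ℂ = (((n : ℝ)⁻¹ * Q f : ℝ) : ℂ) := fun f => inner_empCov x f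
    have hsum_eq : ∀ (m : ℕ) (w : Fin m → H) (U : Submodule ℂ H), Orthonormal ℂ w →
        Submodule.span ℂ (Set.range w) = U →
        ∑ i, ‖proj U (x i)‖ ^ 2 = ∑ j, Q (w j) := by
      intro m w U hwon hwspan
      rw [Finset.sum_congr rfl fun i _ => norm_proj_sq hwon hwspan (x i), Finset.sum_comm]
      exact Finset.sum_congr rfl fun j _ => Finset.sum_congr rfl fun i _ => by
        rw [norm_inner_symm]
    have hW_eq : ∑ i, ‖proj W (x i)‖ ^ 2 = ∑ j, Q (u j) :=
      hsum_eq k u W hu_on hWspan.symm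
    have hQu : ∀ j : Fin k, Q (u j) = n * approxNum (empCov x) j := by
      intro j
      have h1 := hQC (u j)
      rw [hu_eig j, inner_smul_right] at h1
      have h2 : ⟪u j, u j⟫_ℂ = 1 := by
        rw [inner_self_eq_norm_sq_to_K, hu_on.1 j]
        norm_num
      rw [h2, mul_one] at h1
      have h3 : approxNum (empCov x) j = (n : ℝ)⁻¹ * Q (u j) := by exact_mod_cast h1
      rw [h3]
      field_simp
    have hVle : ∀ ε : ℝ, 0 < ε → ∑ i, ‖proj V (x i)‖ ^ 2 ≤
        (∑ j : Fin k, n * approxNum (empCov x) j) + n * k * ε := by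
      intro ε hε
      choose F Vs hVsfd hVsrk hVsrange hFnorm using
        fun j : Fin k => approxNum_exists (empCov x) (j : ℕ) hε
      obtain ⟨w, hwon, hwV, hwperp⟩ :=
        exists_orthonormal_perp k V hVfd hVrk.ge Vs hVsfd hVsrk
      have hspanw : Submodule.span ℂ (Set.range w) = V := by
        apply Submodule.eq_of_le_of_finrank_eq
        · rw [Submodule.span_le]
          rintro _ ⟨j, rfl⟩
          exact hwV j
        · rw [finrank_span_eq_card hwon.linearIndependent]
          simp [hVrk]
      have hQw : ∀ j : Fin k, Q (w j) ≤ n * (approxNum (empCov x) j + ε) := by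
        intro j
        have hsplit : ⟪w j, empCov x (w j)⟫_ℂ
            = ⟪w j, (empCov x - F j) (w j)⟫_ℂ + ⟪w j, F j (w j)⟫_ℂ := by
          rw [← inner_add_right]
          congr 1
          simp [ContinuousLinearMap.sub_apply]
        have hF0 : ⟪w j, F j (w j)⟫_ℂ = 0 := by
          have hmem : F j (w j) ∈ Vs j :=
            hVsrange j (LinearMap.mem_range_self _ (w j))
          exact (Submodule.mem_orthogonal' _ _).mp (hwperp j) _ hmem
        have hre : (⟪w j, empCov x (w j)⟫_ℂ).re ≤ approxNum (empCov x) j + ε := by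
          rw [hsplit, hF0, add_zero]
          have h1 : (⟪w j, (empCov x - F j) (w j)⟫_ℂ).re
              ≤ ‖⟪w j, (empCov x - F j) (w j)⟫_ℂ‖ := by
            calc (⟪w j, (empCov x - F j) (w j)⟫_ℂ).re
                ≤ |(⟪w j, (empCov x - F j) (w j)⟫_ℂ).re| := le_abs_self _
              _ ≤ ‖⟪w j, (empCov x - F j) (w j)⟫_ℂ‖ := Complex.abs_re_le_norm _
          have h2 : ‖⟪w j, (empCov x - F j) (w j)⟫_ℂ‖
              ≤ ‖w j‖ * ‖(empCov x - F j) (w j)‖ := norm_inner_le_norm _ _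
          have h3 : ‖(empCov x - F j) (w j)‖ ≤ ‖empCov x - F j‖ * ‖w j‖ :=
            ContinuousLinearMap.le_opNorm _ _
          have h4 : ‖w j‖ = 1 := hwon.1 j
          rw [h4] at h2 h3
          have h5 := hFnorm j
          linarith
        have hre2 : (⟪w j, empCov x (w j)⟫_ℂ).re = (n : ℝ)⁻¹ * Q (w j) := by
          rw [hQC (w j), Complex.ofReal_re]
        rw [hre2] at hre
        calc Q (w j) = n * ((n : ℝ)⁻¹ * Q (w j)) := by field_simp
          _ ≤ n * (approxNum (empCov x) j + ε) :=
            mul_le_mul_of_nonneg_left hre hn'.le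
      calc ∑ i, ‖proj V (x i)‖ ^ 2 = ∑ j, Q (w j) := hsum_eq k w V hwon hspanw
        _ ≤ ∑ j : Fin k, n * (approxNum (empCov x) j + ε) :=
            Finset.sum_le_sum fun j _ => hQw j
        _ = (∑ j : Fin k, n * approxNum (empCov x) j) + n * k * ε := by
            simp [mul_add, Finset.sum_add_distrib, Finset.card_univ]
            ring
    have main : ∑ i, ‖proj V (x i)‖ ^ 2 ≤ ∑ i, ‖proj W (x i)‖ ^ 2 := by
      rw [hW_eq, Finset.sum_congr rfl fun j _ => hQu j]
      by_contra hcon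
      push_neg at hcon
      set A := ∑ i, ‖proj V (x i)‖ ^ 2
      set B := ∑ j : Fin k, n * approxNum (empCov x) j
      have hk' : (0 : ℝ) < k := by
        have : (1 : ℕ) ≤ k := hk
        exact_mod_cast Nat.lt_of_lt_of_le Nat.zero_lt_one this
      have hnk : (0 : ℝ) < n * k := mul_pos hn' hk'
      have hεp : (0 : ℝ) < (A - B) / (2 * (n * k)) := div_pos (by linarith) (by positivity)
      have := hVle _ hεp
      have hcalc : n * k * ((A - B) / (2 * (n * k))) = (A - B) / 2 := by
        field_simp
      rw [hcalc] at this
      linarith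
    have hsub : ∀ (U : Submodule ℂ H),
        ∑ i, ‖x i - proj U (x i)‖ ^ 2 = ∑ i, ‖x i‖ ^ 2 - ∑ i, ‖proj U (x i)‖ ^ 2 := by
      intro U
      rw [Finset.sum_congr rfl fun i _ => norm_sub_proj_sq U (x i), Finset.sum_sub_distrib]
    rw [hsub W, hsub V]
    apply mul_le_mul_of_nonneg_left _ (inv_nonneg.mpr hn'.le)
    linarith

end SubspaceLearning
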